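/- For every N ∈ ℕ and every x ∈ ℝ one has Σ_{k=1}^N (cos(2π(2^k − 1)x) + cos(4π(2^k − 1)x)) = 2·cos(πx)·Σ_{k=1}^N cos(2π(2^k − 3/2)x) + cos(2π(2^{N+1} − 2)x) − 1. -/

import Mathlib

open Real Finset

lemma two_cos_cos (a b : ℝ) :
    2 * Real.cos b * Real.cos a = Real.cos (a + b) + Real.cos (a - b) := by
  rw [Real.cos_add, Real.cos_sub]; ring

/-- The exact trigonometric identity underlying the Erdős–Fortet example, for the
sequence `n_k = 2^k - 1` and the function `f(x) = cos(2πx) + cos(4πx)`. -/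
theorem statement12 (N : ℕ) (x : ℝ) :
    ∑ k ∈ Finset.Icc 1 N,
        (Real.cos (2 * Real.pi * ((2:ℝ) ^ k - 1) * x)
          + Real.cos (4 * Real.pi * ((2:ℝ) ^ k - 1) * x))
      = 2 * Real.cos (Real.pi * x) *
          ∑ k ∈ Finset.Icc 1 N, Real.cos (2 * Real.pi * ((2:ℝ) ^ k - 3 / 2) * x)
        + Real.cos (2 * Real.pi * ((2:ℝ) ^ (N + 1) - 2) * x) - 1 := by
  induction N with
  | zero => simp
  | succ n ih =>
      rw [Finset.sum_Icc_succ_top (by omega), Finset.sum_Icc_succ_top (by omega), mul_add, ih]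
      have h1 : 2 * Real.cos (Real.pi * x) *
          Real.cos (2 * Real.pi * ((2:ℝ) ^ (n + 1) - 3 / 2) * x)
          = Real.cos (2 * Real.pi * ((2:ℝ) ^ (n + 1) - 1) * x)
            + Real.cos (2 * Real.pi * ((2:ℝ) ^ (n + 1) - 2) * x) := by
        rw [two_cos_cos]
        congr 1 <;> ring_nf
      have h2 : Real.cos (4 * Real.pi * ((2:ℝ) ^ (n + 1) - 1) * x)
          = Real.cos (2 * Real.pi * ((2:ℝ) ^ (n + 1 + 1) - 2) * x) := by
        ring_nf
      rw [h2]
      linarith [h1]
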